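/- Let X be a complex Banach space, A a positive operator on X, m ≥ 1 an integer, and α ∈ (0,1). Then the Bochner integral ∫₀^∞ s^{m-α} (s+A)^{-(m+1)} ds converges in L(X) and (sin(πα)/π) · m!/((1-α)(2-α)···(m-α)) · ∫₀^∞ s^{m-α} (s+A)^{-(m+1)} ds = A^{-α}, where A^{-α} = (sin(πα)/π) ∫₀^∞ s^{-α}(s+A)^{-1} ds. -/

import Mathlib

open MeasureTheory Real Set Filter Asymptotics

noncomputable section

/-- `R` is a two-sided bounded inverse of `lam + A : D(A) → X`;
in particular `lam + A` is bijective from `D(A)` onto `X` with bounded inverse `R`. -/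
def ResolventAt {X : Type*} [NormedAddCommGroup X] [NormedSpace ℂ X]
    (A : X →ₗ.[ℂ] X) (lam : ℂ) (R : X →L[ℂ] X) : Prop :=
  (∀ x : A.domain, R (lam • (x : X) + A x) = x) ∧
  (∀ y : X, ∃ h : R y ∈ A.domain, lam • R y + A ⟨R y, h⟩ = y)

/-- `A` is a positive operator with constant `M ≥ 1` and resolvent family `R`. -/
structure IsPositive {X : Type*} [NormedAddCommGroup X] [NormedSpace ℂ X]
    (A : X →ₗ.[ℂ] X) (M : ℝ) (R : ℝ → X →L[ℂ] X) : Prop where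
  dense_domain : Dense (A.domain : Set X)
  closed_graph : IsClosed (A.graph : Set (X × X))
  one_le : 1 ≤ M
  resolvent : ∀ s : ℝ, 0 ≤ s → ResolventAt A (s : ℂ) (R s)
  bound : ∀ s : ℝ, 0 ≤ s → (1 + s) * ‖R s‖ ≤ M

/-- The Balakrishnan fractional power `A ^ (-α)`, expressed through the
resolvent family `R` of `A`:  `A⁻ᵅ = (sin (π α) / π) ∫₀^∞ s⁻ᵅ (s+A)⁻¹ ds`. -/
def negPow {X : Type*} [NormedAddCommGroup X] [NormedSpace ℂ X]
    (R : ℝ → X →L[ℂ] X) (α : ℝ) : X →L[ℂ] X :=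
  (Real.sin (π * α) / π) • ∫ s in Ioi (0 : ℝ), s ^ (-α) • R s

namespace Stmt6Aux

set_option linter.unusedSectionVars false
set_option synthInstance.maxHeartbeats 1000000
set_option maxHeartbeats 1000000

variable {X : Type*} [NormedAddCommGroup X] [NormedSpace ℂ X] [CompleteSpace X]
    {M : ℝ} {A : X →ₗ.[ℂ] X} {R : ℝ → X →L[ℂ] X}

lemma M_pos (hA : IsPositive A M R) : 0 < M := lt_of_lt_of_le one_pos hA.one_le

lemma norm_R_le (hA : IsPositive A M R) {s : ℝ} (hs : 0 ≤ s) : ‖R s‖ ≤ M / (1 + s) := by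
  have h := hA.bound s hs
  have h1 : (0:ℝ) < 1 + s := by linarith
  rw [le_div_iff₀ h1]; linarith [h]

lemma norm_R_le' (hA : IsPositive A M R) {s : ℝ} (hs : 0 ≤ s) : ‖R s‖ ≤ M := by
  have h1 : (0:ℝ) < 1 + s := by linarith
  calc ‖R s‖ ≤ M / (1 + s) := norm_R_le hA hs
    _ ≤ M := by
      apply div_le_self (M_pos hA).le
      linarith

lemma res_id (hA : IsPositive A M R) {s t : ℝ} (hs : 0 ≤ s) (ht : 0 ≤ t) :
    R s - R t = (t - s) • (R s * R t) := by
  ext y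
  obtain ⟨h1s, h2s⟩ := hA.resolvent s hs
  obtain ⟨h1t, h2t⟩ := hA.resolvent t ht
  obtain ⟨hmem, heq⟩ := h2t y
  have key : (R s) ((s:ℂ) • (R t y) + A ⟨R t y, hmem⟩) = R t y := h1s ⟨R t y, hmem⟩
  have hAx : (A ⟨R t y, hmem⟩ : X) = y - (t:ℂ) • R t y := eq_sub_of_add_eq' heq
  rw [hAx] at key
  have h2 : (R s) y - (R t) y = ((t:ℂ) - (s:ℂ)) • (R s) ((R t) y) := by
    conv_lhs => rw [← key]
    simp only [map_add, _root_.map_smul, map_sub]; module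
  simp only [ContinuousLinearMap.sub_apply, ContinuousLinearMap.smul_apply,
    ContinuousLinearMap.mul_apply]
  rw [h2, ← Complex.ofReal_sub, Complex.coe_smul]

lemma lipschitz (hA : IsPositive A M R) {s t : ℝ} (hs : 0 ≤ s) (ht : 0 ≤ t) :
    ‖R t - R s‖ ≤ M^2 * |t - s| := by
  rw [res_id hA ht hs]
  calc ‖(s - t) • (R t * R s)‖ = ‖s - t‖ * ‖R t * R s‖ := norm_smul (s-t) (R t * R s)
    _ ≤ |s - t| * (M * M) := by
        apply mul_le_mul_of_nonneg_left _ (abs_nonneg _)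
        exact le_trans (norm_mul_le _ _)
          (mul_le_mul (norm_R_le' hA ht) (norm_R_le' hA hs) (norm_nonneg _) (M_pos hA).le)
    _ = M^2 * |t - s| := by rw [abs_sub_comm]; ring

lemma continuousOn_R (hA : IsPositive A M R) : ContinuousOn R (Ici (0:ℝ)) := by
  have : LipschitzOnWith (M^2).toNNReal R (Ici (0:ℝ)) := by
    rw [lipschitzOnWith_iff_dist_le_mul]
    intro t ht s hs
    rw [dist_eq_norm, dist_eq_norm]
    calc ‖R t - R s‖ ≤ M^2 * |t - s| := lipschitz hA hs ht
      _ = (M^2).toNNReal * ‖t - s‖ := by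
          rw [Real.norm_eq_abs, Real.coe_toNNReal _ (sq_nonneg M)]
  exact this.continuousOn

lemma hasDerivAt_R (hA : IsPositive A M R) {s : ℝ} (hs : 0 < s) :
    HasDerivAt R (-(R s * R s)) s := by
  rw [hasDerivAt_iff_isLittleO]
  have key : ∀ t : ℝ, 0 ≤ t → ‖R t - R s - (t - s) • (-(R s * R s))‖ ≤ (M^3) * ‖t - s‖^2 := by
    intro t ht
    have hst := res_id hA hs.le ht
    have h1 : R t - R s - (t - s) • (-(R s * R s)) = (t - s) • (R s * (R s - R t)) := by
      rw [mul_sub, smul_sub, ← hst, smul_neg]; abel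
    rw [h1]
    calc ‖(t - s) • (R s * (R s - R t))‖ = ‖t - s‖ * ‖R s * (R s - R t)‖ :=
          norm_smul (t-s) (R s * (R s - R t))
      _ ≤ ‖t - s‖ * (M * (M^2 * |t - s|)) := by
          apply mul_le_mul_of_nonneg_left _ (norm_nonneg _)
          refine le_trans (norm_mul_le _ _)
            (mul_le_mul (norm_R_le' hA hs.le) ?_ (norm_nonneg _) (M_pos hA).le)
          rw [← neg_sub, norm_neg]; exact lipschitz hA hs.le ht
      _ = M^3 * ‖t - s‖^2 := by rw [Real.norm_eq_abs]; ring
  have hO : (fun t => R t - R s - (t - s) • (-(R s * R s))) =O[nhds s] fun t => ‖t - s‖^2 := by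
    rw [isBigO_iff]
    refine ⟨M^3, ?_⟩
    filter_upwards [eventually_gt_nhds hs] with t ht
    simpa [abs_of_nonneg (sq_nonneg (t-s))] using key t ht.le
  exact hO.trans_isLittleO (isLittleO_pow_sub_sub s one_lt_two)

lemma hasDerivAt_R_pow (hA : IsPositive A M R) (n : ℕ) {s : ℝ} (hs : 0 < s) :
    HasDerivAt (fun t => R t ^ n) (-((n:ℝ) • (R s ^ (n+1)))) s := by
  induction n with
  | zero => simpa using hasDerivAt_const s (1 : X →L[ℂ] X)
  | succ n ih =>
    have h := ih.mul (hasDerivAt_R hA hs)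
    have heq : (-((n:ℝ) • R s ^ (n + 1))) * R s + R s ^ n * -(R s * R s)
        = -(((n:ℕ)+1 : ℝ) • (R s ^ (n+1+1))) := by
      simp only [pow_succ, neg_mul, smul_mul_assoc, mul_neg, add_smul, one_smul, neg_add,
        mul_assoc]
    rw [heq] at h
    have hfun : (fun t => R t ^ (n + 1)) = (fun t => R t ^ n) * R := by
      funext t; simp [pow_succ]
    rw [hfun]
    simpa only [Nat.cast_add, Nat.cast_one] using h

lemma integrable_aux (hA : IsPositive A M R) {β : ℝ} {n : ℕ} (hn : 1 ≤ n)
    (hβ1 : -1 < β) (hβ2 : β < n - 1) :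
    IntegrableOn (fun s : ℝ => s ^ β • (R s ^ n)) (Ioi 0) := by
  have hmeas : AEStronglyMeasurable (fun s : ℝ => s ^ β • (R s ^ n)) (volume.restrict (Ioi 0)) := by
    refine ContinuousOn.aestronglyMeasurable_of_isSeparable ?_ measurableSet_Ioi
      (TopologicalSpace.IsSeparable.of_separableSpace _)
    refine ContinuousOn.smul (f := fun s : ℝ => s ^ β) (g := fun s => R s ^ n) ?_ ?_
    · exact fun x hx => (Real.continuousAt_rpow_const x β (Or.inl (ne_of_gt hx))).continuousWithinAt
    · exact ((continuousOn_R hA).mono Ioi_subset_Ici_self).pow n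
  have hM : (0:ℝ) < M := M_pos hA
  have hbd : ∀ s : ℝ, 0 < s → ‖s ^ β • (R s ^ n)‖ ≤ s ^ β * M ^ n := by
    intro s hspos
    rw [norm_smul (s ^ β) (R s ^ n), Real.norm_eq_abs, abs_of_nonneg (Real.rpow_nonneg hspos.le β)]
    apply mul_le_mul_of_nonneg_left _ (Real.rpow_nonneg hspos.le β)
    exact le_trans (norm_pow_le' _ hn) (pow_le_pow_left₀ (norm_nonneg _) (norm_R_le' hA hspos.le) n)
  rw [← Ioc_union_Ioi_eq_Ioi (zero_le_one)]
  apply IntegrableOn.union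
  · -- on Ioc 0 1, dominate by M^n * s^β
    apply Integrable.mono (g := fun s : ℝ => M ^ n * s ^ β)
    · exact ((intervalIntegral.intervalIntegrable_rpow' hβ1 (a := 0) (b := 1)).1.const_mul (M^n))
    · exact hmeas.mono_measure (Measure.restrict_mono Ioc_subset_Ioi_self le_rfl)
    · filter_upwards [ae_restrict_mem measurableSet_Ioc] with s hs
      rw [Real.norm_eq_abs,
        abs_of_nonneg (mul_nonneg (pow_nonneg hM.le n) (Real.rpow_nonneg hs.1.le β))]
      calc ‖s ^ β • (R s ^ n)‖ ≤ s ^ β * M ^ n := hbd s hs.1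
        _ = M ^ n * s ^ β := by ring
  · -- on Ioi 1, dominate by M^n * s^(β - n)
    apply Integrable.mono (g := fun s : ℝ => M ^ n * s ^ (β - n))
    · exact (integrableOn_Ioi_rpow_of_lt (by linarith) zero_lt_one).const_mul (M^n)
    · exact hmeas.mono_measure (Measure.restrict_mono (Ioi_subset_Ioi zero_le_one) le_rfl)
      -- Ioi 1 ⊆ Ioi 0
    · filter_upwards [ae_restrict_mem measurableSet_Ioi] with s hs
      have hs1 : (1:ℝ) < s := hs
      have hs0 : (0:ℝ) < s := lt_trans zero_lt_one hs1
      rw [Real.norm_eq_abs,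
        abs_of_nonneg (mul_nonneg (pow_nonneg hM.le n) (Real.rpow_nonneg hs0.le _))]
      rw [norm_smul (s ^ β) (R s ^ n), Real.norm_eq_abs, abs_of_nonneg (Real.rpow_nonneg hs0.le β)]
      have h1 : ‖R s ^ n‖ ≤ (M / s) ^ n := by
        refine le_trans (norm_pow_le' _ hn) (pow_le_pow_left₀ (norm_nonneg _) ?_ n)
        calc ‖R s‖ ≤ M / (1 + s) := norm_R_le hA hs0.le
          _ ≤ M / s := by
            apply div_le_div_of_nonneg_left hM.le hs0
            linarith
      calc s ^ β * ‖R s ^ n‖ ≤ s ^ β * (M / s) ^ n := by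
            exact mul_le_mul_of_nonneg_left h1 (Real.rpow_nonneg hs0.le β)
        _ = M ^ n * s ^ (β - n) := by
            rw [div_pow, Real.rpow_sub hs0, Real.rpow_natCast]
            ring

lemma norm_f_le (hA : IsPositive A M R) {β : ℝ} (hβ : 0 ≤ β) {n : ℕ} (hn : 1 ≤ n)
    {s : ℝ} (hs : 0 ≤ s) : ‖s ^ β • (R s ^ n)‖ ≤ M ^ n * s ^ β := by
  rw [norm_smul (s ^ β) (R s ^ n), Real.norm_eq_abs, abs_of_nonneg (Real.rpow_nonneg hs β)]
  calc s ^ β * ‖R s ^ n‖ ≤ s ^ β * M ^ n := by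
        apply mul_le_mul_of_nonneg_left _ (Real.rpow_nonneg hs β)
        exact le_trans (norm_pow_le' _ hn) (pow_le_pow_left₀ (norm_nonneg _) (norm_R_le' hA hs) n)
    _ = M ^ n * s ^ β := mul_comm _ _

lemma tendsto_zero (hA : IsPositive A M R) {β : ℝ} (hβ : 0 < β) {n : ℕ} (hn : 1 ≤ n) :
    Tendsto (fun s : ℝ => s ^ β • (R s ^ n)) (nhdsWithin 0 (Ici 0)) (nhds 0) := by
  apply squeeze_zero_norm' (a := fun s : ℝ => M ^ n * s ^ β)
  · filter_upwards [self_mem_nhdsWithin] with s hs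
    exact norm_f_le hA hβ.le hn hs
  · have h1 : ContinuousAt (fun s : ℝ => s ^ β) 0 :=
      Real.continuousAt_rpow_const 0 β (Or.inr hβ.le)
    have h2 : Tendsto (fun s : ℝ => M ^ n * s ^ β) (nhds 0) (nhds (M ^ n * (0:ℝ) ^ β)) :=
      (h1.tendsto).const_mul _
    rw [Real.zero_rpow hβ.ne', mul_zero] at h2
    exact h2.mono_left nhdsWithin_le_nhds

lemma tendsto_atTop_zero (hA : IsPositive A M R) {β : ℝ} {n : ℕ} (hn : 1 ≤ n)
    (hβ : β < n) : Tendsto (fun s : ℝ => s ^ β • (R s ^ n)) atTop (nhds 0) := by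
  apply squeeze_zero_norm' (a := fun s : ℝ => M ^ n * s ^ (β - (n:ℝ)))
  · filter_upwards [eventually_ge_atTop (1:ℝ)] with s hs1
    have hs0 : (0:ℝ) < s := lt_of_lt_of_le zero_lt_one hs1
    rw [norm_smul (s ^ β) (R s ^ n), Real.norm_eq_abs, abs_of_nonneg (Real.rpow_nonneg hs0.le β)]
    have h1 : ‖R s ^ n‖ ≤ (M / s) ^ n := by
      refine le_trans (norm_pow_le' _ hn) (pow_le_pow_left₀ (norm_nonneg _) ?_ n)
      calc ‖R s‖ ≤ M / (1 + s) := norm_R_le hA hs0.le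
        _ ≤ M / s := by
          apply div_le_div_of_nonneg_left (M_pos hA).le hs0
          linarith
    calc s ^ β * ‖R s ^ n‖ ≤ s ^ β * (M / s) ^ n :=
          mul_le_mul_of_nonneg_left h1 (Real.rpow_nonneg hs0.le β)
      _ = M ^ n * s ^ (β - n) := by
          rw [div_pow, Real.rpow_sub hs0, Real.rpow_natCast]; ring
  · have : Tendsto (fun s : ℝ => s ^ (β - n)) atTop (nhds 0) := by
      have hneg : β - n < 0 := by linarith
      have := tendsto_rpow_neg_atTop (y := (n:ℝ) - β) (by linarith)
      simpa [neg_sub] using this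
    simpa using this.const_mul (M ^ n)

lemma step (hA : IsPositive A M R) {α : ℝ} (hα : α ∈ Ioo (0:ℝ) 1) (n : ℕ) :
    (((n:ℝ) + 1 - α)) • (∫ s in Ioi (0:ℝ), s ^ ((n:ℝ) - α) • (R s ^ (n+1))) =
    ((n:ℝ) + 1) • (∫ s in Ioi (0:ℝ), s ^ (((n:ℝ) + 1) - α) • (R s ^ (n+2))) := by
  obtain ⟨hα0, hα1⟩ := hα
  set f : ℝ → (X →L[ℂ] X) := fun s => s ^ (((n:ℝ) + 1) - α) • (R s ^ (n+1)) with hf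
  set D : ℝ → (X →L[ℂ] X) := fun s =>
    ((n:ℝ) + 1 - α) • (s ^ ((n:ℝ) - α) • (R s ^ (n+1))) -
    ((n:ℝ) + 1) • (s ^ (((n:ℝ) + 1) - α) • (R s ^ (n+2))) with hD
  have hint1 : IntegrableOn (fun s : ℝ => s ^ ((n:ℝ) - α) • (R s ^ (n+1))) (Ioi 0) := by
    apply integrable_aux hA (Nat.le_add_left 1 n) (by linarith)
    push_cast; linarith
  have hint2 : IntegrableOn (fun s : ℝ => s ^ (((n:ℝ) + 1) - α) • (R s ^ (n+2))) (Ioi 0) := by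
    apply integrable_aux hA (Nat.le_add_left 1 (n+1)) (by push_cast; linarith)
    push_cast; linarith
  have hDint : IntegrableOn D (Ioi 0) := (hint1.smul ((n:ℝ) + 1 - α)).sub (hint2.smul ((n:ℝ) + 1))
  have hderiv : ∀ x ∈ Ioi (0:ℝ), HasDerivAt f (D x) x := by
    intro x hx
    have hx0 : (0:ℝ) < x := hx
    have h1 : HasDerivAt (fun s : ℝ => s ^ (((n:ℝ) + 1) - α))
        ((((n:ℝ) + 1) - α) * x ^ ((((n:ℝ) + 1) - α) - 1)) x :=
      Real.hasDerivAt_rpow_const (Or.inl hx0.ne')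
    have h2 : HasDerivAt (fun s : ℝ => R s ^ (n+1)) (-(((n+1 : ℕ):ℝ) • (R x ^ (n+2)))) x :=
      hasDerivAt_R_pow hA (n+1) hx0
    have h3 := h1.smul h2
    have heq : x ^ (((n:ℝ) + 1) - α) • (-(((n+1 : ℕ):ℝ) • (R x ^ (n+2))))
        + ((((n:ℝ) + 1) - α) * x ^ ((((n:ℝ) + 1) - α) - 1)) • (R x ^ (n+1)) = D x := by
      rw [hD]
      have hexp : (((n:ℝ) + 1) - α) - 1 = (n:ℝ) - α := by ring
      rw [hexp]
      push_cast
      simp only [smul_neg, smul_smul]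
      rw [mul_comm (x ^ ((n:ℝ) + 1 - α)) ((n:ℝ) + 1)]
      abel
    rw [heq] at h3
    exact h3
  have hcont : ContinuousWithinAt f (Ici 0) 0 := by
    have h0 : f 0 = 0 := by
      rw [hf]
      simp only [Real.zero_rpow (by linarith : ((n:ℝ) + 1) - α ≠ 0), zero_smul]
    unfold ContinuousWithinAt
    rw [h0]
    exact tendsto_zero hA (by linarith) (Nat.le_add_left 1 n)
  have htop : Tendsto f atTop (nhds 0) :=
    tendsto_atTop_zero hA (Nat.le_add_left 1 n) (by push_cast; linarith)
  have hFTC := integral_Ioi_of_hasDerivAt_of_tendsto hcont hderiv hDint htop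
  have h0 : f 0 = 0 := by
    rw [hf]
    simp only [Real.zero_rpow (by linarith : ((n:ℝ) + 1) - α ≠ 0), zero_smul]
  rw [h0, sub_zero] at hFTC
  have e1 : Integrable (fun x : ℝ => ((n:ℝ) + 1 - α) • (x ^ ((n:ℝ) - α) • (R x ^ (n+1))))
      (volume.restrict (Ioi 0)) := hint1.smul ((n:ℝ) + 1 - α)
  have e2 : Integrable (fun x : ℝ => ((n:ℝ) + 1) • (x ^ (((n:ℝ) + 1) - α) • (R x ^ (n+2))))
      (volume.restrict (Ioi 0)) := hint2.smul ((n:ℝ) + 1)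
  have hsplit : ∫ x in Ioi (0:ℝ), D x =
      ((n:ℝ) + 1 - α) • (∫ s in Ioi (0:ℝ), s ^ ((n:ℝ) - α) • (R s ^ (n+1))) -
      ((n:ℝ) + 1) • (∫ s in Ioi (0:ℝ), s ^ (((n:ℝ) + 1) - α) • (R s ^ (n+2))) := by
    rw [hD]
    rw [integral_sub e1 e2, integral_smul, integral_smul]
  rw [hsplit] at hFTC
  exact sub_eq_zero.mp hFTC

lemma prod_formula (hA : IsPositive A M R) {α : ℝ} (hα : α ∈ Ioo (0:ℝ) 1) (n : ℕ) :
    (∏ k ∈ Finset.Icc 1 n, ((k:ℝ) - α)) • (∫ s in Ioi (0:ℝ), s ^ (-α) • R s)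
      = (n.factorial : ℝ) • ∫ s in Ioi (0:ℝ), s ^ ((n:ℝ) - α) • (R s ^ (n+1)) := by
  induction n with
  | zero => simp
  | succ n ih =>
    simp only [Nat.cast_add, Nat.cast_one]
    show (∏ k ∈ Finset.Icc 1 (n+1), ((k:ℝ) - α)) • (∫ s in Ioi (0:ℝ), s ^ (-α) • R s)
      = ((n+1).factorial : ℝ) • ∫ s in Ioi (0:ℝ), s ^ (((n:ℝ) + 1) - α) • (R s ^ (n+2))
    rw [Finset.prod_Icc_succ_top (by omega : 1 ≤ n+1)]
    have hcast : ((↑(n+1) : ℝ) - α) = ((n:ℝ) + 1 - α) := by push_cast; ring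
    rw [hcast, mul_comm, mul_smul, ih, smul_smul, mul_comm, ← smul_smul, step hA hα n,
      smul_smul, Nat.factorial_succ]
    congr 1
    push_cast
    ring

end Stmt6Aux

open Stmt6Aux in
theorem stmt6 {X : Type*} [NormedAddCommGroup X] [NormedSpace ℂ X] [CompleteSpace X]
    (M : ℝ) (A : X →ₗ.[ℂ] X) (R : ℝ → X →L[ℂ] X) (hA : IsPositive A M R)
    (m : ℕ) (hm : 1 ≤ m) (α : ℝ) (hα : α ∈ Ioo (0 : ℝ) 1) :
    IntegrableOn (fun s : ℝ => s ^ ((m : ℝ) - α) • (R s ^ (m + 1))) (Ioi 0) ∧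
    (Real.sin (π * α) / π * ((m.factorial : ℝ) / ∏ k ∈ Finset.Icc 1 m, ((k : ℝ) - α))) •
        ∫ s in Ioi (0 : ℝ), s ^ ((m : ℝ) - α) • (R s ^ (m + 1)) = negPow R α := by
  obtain ⟨hα0, hα1⟩ := hα
  have hm1 : (1:ℝ) ≤ (m:ℝ) := by exact_mod_cast hm
  have hint : IntegrableOn (fun s : ℝ => s ^ ((m : ℝ) - α) • (R s ^ (m + 1))) (Ioi 0) := by
    apply integrable_aux hA (by omega) (by linarith)
    push_cast; linarith
  refine ⟨hint, ?_⟩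
  have hc : 0 < ∏ k ∈ Finset.Icc 1 m, ((k:ℝ) - α) := by
    apply Finset.prod_pos
    intro k hk
    have h1 : 1 ≤ k := (Finset.mem_Icc.mp hk).1
    have h1' : (1:ℝ) ≤ (k:ℝ) := by exact_mod_cast h1
    linarith
  have hp := prod_formula hA ⟨hα0, hα1⟩ m
  rw [negPow, mul_smul]
  congr 1
  rw [div_eq_inv_mul, mul_smul, ← hp, smul_smul, inv_mul_cancel₀ hc.ne', one_smul]
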